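/- Let γ > λ > 0 be reals, let K be the complex n×n matrix with entries K_{jk} = (γ+λ)δ_{j,k+1} − (γ−λ)δ_{j+1,k}, let 𝔾 be the Hermitian matrix with entries 𝔾_{jk} = i δ_{j,k+1} − i δ_{j+1,k}, let κ = √((γ−λ)/(γ+λ)), and let V(κ) be the invertible diagonal matrix with entries V(κ)_{jk} = κ^{j−1} δ_{jk}. Then V(κ) K V(κ)^{−1} = −i √(γ² − λ²) · 𝔾. -/

import Mathlib

open scoped Matrix

/-- The Hatano–Nelson hopping matrix `K_{jk} = (γ+λ)δ_{j,k+1} − (γ−λ)δ_{j+1,k}`. -/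
noncomputable def hnK (n : ℕ) (γ lam : ℝ) : Matrix (Fin n) (Fin n) ℂ :=
  Matrix.of fun j k =>
    ((γ + lam : ℝ) : ℂ) * (if (j : ℕ) = (k : ℕ) + 1 then 1 else 0)
      - ((γ - lam : ℝ) : ℂ) * (if (j : ℕ) + 1 = (k : ℕ) then 1 else 0)

/-- The Hermitian matrix `𝔾_{jk} = i δ_{j,k+1} − i δ_{j+1,k}`. -/
noncomputable def hnG (n : ℕ) : Matrix (Fin n) (Fin n) ℂ :=
  Matrix.of fun j k =>
    Complex.I * (if (j : ℕ) = (k : ℕ) + 1 then 1 else 0)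
      - Complex.I * (if (j : ℕ) + 1 = (k : ℕ) then 1 else 0)

/-- The diagonal matrix `V(κ)_{jk} = κ^{j−1} δ_{jk}` (indices `j = 1, …, n`). -/
noncomputable def hnV (n : ℕ) (κ : ℝ) : Matrix (Fin n) (Fin n) ℂ :=
  Matrix.diagonal fun j => ((κ : ℂ) ^ (j : ℕ))

/-- for `γ > λ > 0` and `κ = √((γ−λ)/(γ+λ))`,
`V(κ) K V(κ)⁻¹ = −i √(γ² − λ²) 𝔾`. -/
theorem stmt17 {n : ℕ} (hn : 0 < n) (γ lam : ℝ) (hgl : lam < γ) (hlam : 0 < lam) :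
    hnV n (Real.sqrt ((γ - lam) / (γ + lam))) * hnK n γ lam
        * (hnV n (Real.sqrt ((γ - lam) / (γ + lam))))⁻¹
      = (-Complex.I * (Real.sqrt (γ ^ 2 - lam ^ 2) : ℝ)) • hnG n := by
  set s := Real.sqrt ((γ - lam) / (γ + lam)) with hs_def
  set t := Real.sqrt (γ ^ 2 - lam ^ 2) with ht_def
  have hgp : 0 < γ + lam := by linarith
  have hgm : 0 < γ - lam := by linarith
  have hspos : 0 < s := Real.sqrt_pos.mpr (div_pos hgm hgp)
  have ht1 : s * (γ + lam) = t := by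
    rw [hs_def, ht_def, Real.sqrt_div hgm.le, div_mul_eq_mul_div,
      show γ ^ 2 - lam ^ 2 = (γ - lam) * (γ + lam) by ring,
      Real.sqrt_mul hgm.le]
    rw [mul_div_assoc, Real.div_sqrt]
  have ht2 : γ - lam = t * s := by
    have := Real.sq_sqrt (div_pos hgm hgp).le
    rw [← hs_def] at this
    have : (γ - lam) = s * s * (γ + lam) := by
      field_simp at this ⊢; nlinarith [this]
    rw [this, ← ht1]; ring
  have hscne : (s : ℂ) ≠ 0 := by
    exact_mod_cast hspos.ne'
  have hVinv : (hnV n s)⁻¹ = Matrix.diagonal (fun j : Fin n => ((s:ℂ)⁻¹) ^ (j:ℕ)) := by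
    apply Matrix.inv_eq_right_inv
    rw [hnV, Matrix.diagonal_mul_diagonal,
      show (fun j : Fin n => (s:ℂ) ^ (j:ℕ) * ((s:ℂ)⁻¹) ^ (j:ℕ)) = fun _ => 1 from
        funext fun j => by rw [← mul_pow, mul_inv_cancel₀ hscne, one_pow],
      Matrix.diagonal_one]
  rw [hVinv]
  ext j k
  rw [Matrix.mul_diagonal, hnV, Matrix.diagonal_mul]
  simp only [hnK, hnG, Matrix.of_apply, Matrix.smul_apply, smul_eq_mul]
  rcases eq_or_ne (j : ℕ) ((k : ℕ) + 1) with h1 | h1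
  · rw [if_pos h1, if_neg (show ¬((j:ℕ) + 1 = (k:ℕ)) by omega)]
    rw [h1, pow_succ]
    have hc : ((γ + lam : ℝ) : ℂ) * (s : ℂ) = (t : ℂ) := by
      rw [← ht1]; push_cast; ring
    push_cast at hc
    have key : (s:ℂ) ^ (k:ℕ) * ((s:ℂ)⁻¹) ^ (k:ℕ) = 1 := by
      rw [← mul_pow, mul_inv_cancel₀ hscne, one_pow]
    field_simp
    push_cast
    linear_combination ((s:ℂ) * (s:ℂ) ^ (k:ℕ) * ((γ:ℂ) + (lam:ℂ))) * Complex.I_sq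
      - (Complex.I ^ 2 * (s:ℂ) ^ (k:ℕ)) * hc
      + (s:ℂ) * ((γ:ℂ) + (lam:ℂ)) * key + (1 - (s:ℂ) ^ (k:ℕ)) * hc
      + (1 - (s:ℂ) ^ (k:ℕ)) * (t:ℂ) * Complex.I_sq
  · rw [if_neg h1]
    rcases eq_or_ne ((j : ℕ) + 1) (k : ℕ) with h2 | h2
    · rw [if_pos h2, ← h2, pow_succ]
      have hc : ((γ - lam : ℝ) : ℂ) = (t : ℂ) * (s : ℂ) := by
        rw [ht2]; push_cast; ring
      push_cast at hc
      have key : (s:ℂ) ^ (j:ℕ) * ((s:ℂ)⁻¹) ^ (j:ℕ) = 1 := by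
        rw [← mul_pow, mul_inv_cancel₀ hscne, one_pow]
      field_simp
      push_cast
      linear_combination (-(s:ℂ) ^ (j:ℕ)) * hc - ((t:ℂ) * (s:ℂ) * (s:ℂ) ^ (j:ℕ)) * Complex.I_sq
        + ((s:ℂ) ^ (j:ℕ) - 1) * hc + ((s:ℂ) ^ (j:ℕ) - 1) * (t:ℂ) * (s:ℂ) * Complex.I_sq
        - ((γ:ℂ) - (lam:ℂ)) * key
    · rw [if_neg h2]; ring
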